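/- Let S be a positive integer and d̄ = 2^S. For every right stochastic matrix φ̄* ∈ 𝒮(d̄) and every Haar vector h ∈ ℋ, it holds that Σ_{j=1}^{d̄} |⟨φ̄* − I_{d̄}, h ⊗ e^{(j)}⟩| / ⟨h ⊗ e^{(j)}, h ⊗ e^{(j)}⟩ ≤ 2, where I_{d̄} is the d̄ × d̄ identity matrix and ⟨·,·⟩ is the Frobenius inner product. -/

import Mathlib

open scoped Classical

noncomputable section

/-- The Haar vector `h^(s,l)` in `ℝ^(2^S)` (1-based math indices mapped to 0-based `Fin`). -/
def haarVec (S s l : ℕ) : Fin (2 ^ S) → ℝ := fun i =>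
  if 2 ^ s * (l - 1) ≤ (i : ℕ) ∧ (i : ℕ) < 2 ^ s * (l - 1) + 2 ^ (s - 1) then 1
  else if 2 ^ s * (l - 1) + 2 ^ (s - 1) ≤ (i : ℕ) ∧ (i : ℕ) < 2 ^ s * l then -1
  else 0

/-- The Haar collection ℋ: the all-ones vector together with all `h^(s,l)`,
`s ∈ [1,S]`, `l ∈ [1, 2^(S-s)]`. -/
def haarSet (S : ℕ) : Set (Fin (2 ^ S) → ℝ) :=
  {fun _ => (1 : ℝ)} ∪
    {v | ∃ s l : ℕ, 1 ≤ s ∧ s ≤ S ∧ 1 ≤ l ∧ l ≤ 2 ^ (S - s) ∧ v = haarVec S s l}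

/-- Outer product of two vectors, as a matrix. -/
def outer {n : ℕ} (x y : Fin n → ℝ) : Matrix (Fin n) (Fin n) ℝ :=
  Matrix.of fun i j => x i * y j

/-- Frobenius inner product of two square matrices. -/
def frob {n : ℕ} (A B : Matrix (Fin n) (Fin n) ℝ) : ℝ := ∑ i, ∑ j, A i j * B i j

/-- The `j`-th canonical basis vector `e^(j)`. -/
def eVec {n : ℕ} (j : Fin n) : Fin n → ℝ := fun k => if k = j then 1 else 0

/-- Right stochastic matrix: nonnegative entries, each row sums to 1. -/
def IsStochastic {n : ℕ} (M : Matrix (Fin n) (Fin n) ℝ) : Prop :=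
  (∀ i j, 0 ≤ M i j) ∧ ∀ i, ∑ j, M i j = 1

/-- Membership in the probability simplex Δ(n). -/
def InSimplex {n : ℕ} (p : Fin n → ℝ) : Prop := (∀ i, 0 ≤ p i) ∧ ∑ i, p i = 1

/-- Action of a (stochastic) matrix on a distribution: `(φ(p))_j = Σ_i p_i φ_{i,j}`. -/
def act {n : ℕ} (M : Matrix (Fin n) (Fin n) ℝ) (p : Fin n → ℝ) : Fin n → ℝ :=
  fun j => ∑ i, p i * M i j

/-- `Σ_{i=1}^{n-1} 1[M_i ≠ M_{i+1}]`: the number of consecutive-row changes of `M`. -/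
def rowSwitch {n : ℕ} (M : Matrix (Fin n) (Fin n) ℝ) : ℕ :=
  (Finset.univ.filter fun i : Fin n =>
    ∃ h : (i : ℕ) + 1 < n, M i ≠ M ⟨(i : ℕ) + 1, h⟩).card

/-- Uniformity `d^unif_φ`: the frequency of the most frequent row of `φ`. -/
def dUnif {n : ℕ} (M : Matrix (Fin n) (Fin n) ℝ) : ℕ :=
  Finset.univ.sup fun i : Fin n => (Finset.univ.filter fun k : Fin n => M k = M i).card

/-- Degree of self-map `d^self_φ`: the number of rows `i` with `φ_i = e^(i)`. -/
def dSelf {n : ℕ} (M : Matrix (Fin n) (Fin n) ℝ) : ℕ :=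
  (Finset.univ.filter fun i : Fin n => M i = eVec i).card

/-- for every right stochastic `φ̄*` and every Haar vector `h ∈ ℋ`,
`Σ_j |⟨φ̄* − I, h ⊗ e^(j)⟩| / ⟨h ⊗ e^(j), h ⊗ e^(j)⟩ ≤ 2`. -/

lemma haar_entries (S : ℕ) (h : Fin (2 ^ S) → ℝ) (hh : h ∈ haarSet S) :
    (∀ i, h i = 1 ∨ h i = -1 ∨ h i = 0) ∧ ∃ i, h i ≠ 0 := by
  rcases hh with hh | ⟨s, l, hs1, hsS, hl1, hlS, rfl⟩
  · simp only [Set.mem_singleton_iff] at hh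
    subst hh
    refine ⟨fun i => Or.inl rfl, ⟨0, ?_⟩, ?_⟩
    · exact Nat.pow_pos (by norm_num)
    · norm_num
  · constructor
    · intro i
      unfold haarVec
      split_ifs <;> tauto
    · have hlt : 2 ^ s * (l - 1) < 2 ^ S := by
        calc 2 ^ s * (l - 1) < 2 ^ s * l := by
              have : 0 < l := hl1
              have : l - 1 < l := Nat.sub_lt this (by norm_num)
              have hp : 0 < 2 ^ s := Nat.pow_pos (by norm_num)
              exact (Nat.mul_lt_mul_left hp).mpr this
          _ ≤ 2 ^ s * 2 ^ (S - s) := Nat.mul_le_mul_left _ hlS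
          _ = 2 ^ S := by rw [← pow_add]; congr 1; omega
      refine ⟨⟨2 ^ s * (l - 1), hlt⟩, ?_⟩
      unfold haarVec
      have : 0 < 2 ^ (s - 1) := Nat.pow_pos (by norm_num)
      simp only [Fin.val_mk]
      rw [if_pos ⟨le_refl _, by omega⟩]
      norm_num

theorem sum_abs_coeff_stochastic_sub_id_le_two (S : ℕ) (hS : 1 ≤ S)
    (φ : Matrix (Fin (2 ^ S)) (Fin (2 ^ S)) ℝ) (hφ : IsStochastic φ) :
    ∀ h ∈ haarSet S,
      ∑ j : Fin (2 ^ S),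
        |frob (φ - 1) (outer h (eVec j))| / frob (outer h (eVec j)) (outer h (eVec j)) ≤ 2 := by
  intro h hh
  obtain ⟨hval, i0, hi0⟩ := haar_entries S h hh
  set N : ℝ := ∑ i, h i * h i with hN
  have habs : ∀ i, |h i| = h i * h i := by
    intro i
    rcases hval i with h1 | h1 | h1 <;> rw [h1] <;> norm_num
  have hNpos : 0 < N := by
    refine Finset.sum_pos' (fun i _ => mul_self_nonneg _) ⟨i0, Finset.mem_univ _, ?_⟩
    exact mul_self_pos.mpr hi0
  have hden : ∀ j, frob (outer h (eVec j)) (outer h (eVec j)) = N := by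
    intro j
    unfold frob outer eVec
    simp only [Matrix.of_apply, mul_ite, ite_mul, mul_one, mul_zero, one_mul, zero_mul]
    rw [hN]
    refine Finset.sum_congr rfl fun i _ => ?_
    rw [Finset.sum_ite_eq' Finset.univ j]
    simp
  have hnum : ∀ j, frob (φ - 1) (outer h (eVec j)) = ∑ i, (φ - 1) i j * h i := by
    intro j
    unfold frob outer eVec
    simp only [Matrix.of_apply, mul_ite, ite_mul, mul_one, mul_zero]
    refine Finset.sum_congr rfl fun i _ => ?_
    rw [Finset.sum_ite_eq' Finset.univ j]
    simp [mul_comm]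
  have key : ∑ j : Fin (2 ^ S), |∑ i, (φ - 1) i j * h i| ≤ 2 * N := by
    calc ∑ j : Fin (2 ^ S), |∑ i, (φ - 1) i j * h i|
        ≤ ∑ j : Fin (2 ^ S), ∑ i, |(φ - 1) i j * h i| :=
          Finset.sum_le_sum fun j _ => Finset.abs_sum_le_sum_abs _ _
      _ = ∑ i, ∑ j : Fin (2 ^ S), |(φ - 1) i j| * |h i| := by
          rw [Finset.sum_comm]
          exact Finset.sum_congr rfl fun i _ => Finset.sum_congr rfl fun j _ => abs_mul _ _
      _ = ∑ i, (∑ j : Fin (2 ^ S), |(φ - 1) i j|) * |h i| := by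
          exact Finset.sum_congr rfl fun i _ => (Finset.sum_mul _ _ _).symm
      _ ≤ ∑ i, 2 * |h i| := by
          refine Finset.sum_le_sum fun i _ => mul_le_mul_of_nonneg_right ?_ (abs_nonneg _)
          have : ∀ j, |(φ - 1) i j| ≤ φ i j + (1 : Matrix (Fin (2^S)) (Fin (2^S)) ℝ) i j := by
            intro j
            have h1 : (φ - 1) i j = φ i j - (1 : Matrix (Fin (2^S)) (Fin (2^S)) ℝ) i j := rfl
            rw [h1]
            have h2 : (0:ℝ) ≤ (1 : Matrix (Fin (2^S)) (Fin (2^S)) ℝ) i j := by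
              simp [Matrix.one_apply]
              split_ifs <;> norm_num
            have h3 := hφ.1 i j
            rw [abs_sub_le_iff]
            constructor <;> nlinarith
          calc ∑ j, |(φ - 1) i j| ≤ ∑ j, (φ i j + (1 : Matrix (Fin (2^S)) (Fin (2^S)) ℝ) i j) :=
                Finset.sum_le_sum fun j _ => this j
            _ = (∑ j, φ i j) + ∑ j, (1 : Matrix (Fin (2^S)) (Fin (2^S)) ℝ) i j :=
                Finset.sum_add_distrib
            _ = 1 + 1 := by
                rw [hφ.2 i]
                congr 1
                simp [Matrix.one_apply]
            _ = 2 := by norm_num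
      _ = 2 * N := by
          rw [Finset.mul_sum]
          exact Finset.sum_congr rfl fun i _ => by rw [habs i]
  calc ∑ j : Fin (2 ^ S),
        |frob (φ - 1) (outer h (eVec j))| / frob (outer h (eVec j)) (outer h (eVec j))
      = (∑ j : Fin (2 ^ S), |∑ i, (φ - 1) i j * h i|) / N := by
        rw [Finset.sum_div]
        exact Finset.sum_congr rfl fun j _ => by rw [hden j, hnum j]
    _ ≤ (2 * N) / N := by
        exact div_le_div_of_nonneg_right key hNpos.le |>.trans_eq rfl
    _ = 2 := by field_simp
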